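/- Let H be a Hilbert space and A a bounded normal operator on H. Then 0 is at most an isolated point of the spectrum σ(A) (i.e. 0 ∉ σ(A) or 0 is an isolated point of σ(A)) if and only if the range R(A) is closed in H. -/

import Mathlib

set_option maxHeartbeats 1000000

open ContinuousLinearMap

section Aux

variable {H : Type*} [NormedAddCommGroup H] [InnerProductSpace ℂ H] [CompleteSpace H]

local notation "⟪" x ", " y "⟫" => @inner ℂ _ _ x y

/-- If `A` has a "pseudo-inverse" `B` with `A * B * A = A`, then the range of `A` is closed. -/
lemma statement3_range_closed_of_pseudoinv (A B : H →L[ℂ] H) (h : A * B * A = A) :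
    IsClosed (Set.range A) := by
  have key : Set.range A = {x | A (B x) = x} := by
    ext x
    constructor
    · rintro ⟨y, rfl⟩
      have := congrFun (congrArg (DFunLike.coe) h) y
      simpa [mul_def] using this
    · intro hx
      exact ⟨B x, hx⟩
  rw [key]
  exact isClosed_eq (A.continuous.comp B.continuous) continuous_id

/-- A normal operator and its adjoint have the same pointwise norms. -/
lemma statement3_norm_adjoint_apply_eq (A : H →L[ℂ] H)
    (hA : A.adjoint ∘L A = A ∘L A.adjoint) (x : H) :
    ‖A.adjoint x‖ = ‖A x‖ := by
  have h1 : ⟪A.adjoint x, A.adjoint x⟫ = ⟪A x, A x⟫ := by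
    rw [adjoint_inner_left, ← adjoint_inner_right]
    congr 1
    exact (congrFun (congrArg DFunLike.coe hA) x).symm
  have h2 : ‖A.adjoint x‖ * ‖A.adjoint x‖ = ‖A x‖ * ‖A x‖ := by
    rw [← @inner_self_eq_norm_mul_norm ℂ, ← @inner_self_eq_norm_mul_norm ℂ, h1]
  exact mul_self_inj (norm_nonneg _) (norm_nonneg _) |>.mp h2

/-- A closed-range operator is bounded below on the orthogonal complement of its kernel. -/
lemma statement3_exists_bddBelow (A : H →L[ℂ] H) (hcl : IsClosed (Set.range A)) :
    ∃ c : ℝ, 0 < c ∧ ∀ v ∈ (LinearMap.ker (A : H →ₗ[ℂ] H))ᗮ, c * ‖v‖ ≤ ‖A v‖ := by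
  set N : Submodule ℂ H := LinearMap.ker (A : H →ₗ[ℂ] H) with hN
  have hNc : IsClosed (N : Set H) := ContinuousLinearMap.isClosed_ker A
  haveI : CompleteSpace N := hNc.completeSpace_coe
  set K : Submodule ℂ H := LinearMap.range (A : H →ₗ[ℂ] H) with hKdef
  have hKc : IsClosed (K : Set H) := by
    have : (K : Set H) = Set.range A := by
      simp [hKdef, LinearMap.coe_range]
    rwa [this]
  haveI : CompleteSpace K := hKc.completeSpace_coe
  have hmem : ∀ v : Nᗮ, A (Nᗮ.subtypeL v) ∈ K := fun v => LinearMap.mem_range_self _ _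
  set T : Nᗮ →L[ℂ] K := (A.comp Nᗮ.subtypeL).codRestrict K hmem with hT
  have hinj : LinearMap.ker (T : Nᗮ →ₗ[ℂ] K) = ⊥ := by
    rw [Submodule.eq_bot_iff]
    rintro ⟨v, hv⟩ hv0
    have hAv : A v = 0 := by
      have := congrArg (Subtype.val) (hv0 : T ⟨v, hv⟩ = 0)
      exact this
    have hvN : v ∈ N := hAv
    have : v = 0 := (Submodule.orthogonal_disjoint N).le_bot ⟨hvN, hv⟩
    simp [this]
  have hsurj : LinearMap.range (T : Nᗮ →ₗ[ℂ] K) = ⊤ := by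
    rw [Submodule.eq_top_iff']
    rintro ⟨y, hy⟩
    obtain ⟨x, rfl⟩ := hy
    obtain ⟨u, hu, v, hv, rfl⟩ := N.exists_add_mem_mem_orthogonal x
    refine ⟨⟨v, hv⟩, ?_⟩
    apply Subtype.ext
    simp [hT, map_add, hu, show A u = 0 from hu]
    rfl
  obtain ⟨Mnn, hanti⟩ : ∃ Mnn : NNReal, AntilipschitzWith Mnn ⇑T := by
    have h := (ContinuousLinearEquiv.ofBijective T hinj hsurj).antilipschitz
    rw [ContinuousLinearEquiv.coeFn_ofBijective] at h
    exact ⟨_, h⟩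
  set M : ℝ := (Mnn : ℝ) with hM
  have hbound : ∀ x : Nᗮ, ‖x‖ ≤ M * ‖T x‖ := fun x => T.bound_of_antilipschitz hanti x
  refine ⟨(M + 1)⁻¹, by positivity, ?_⟩
  intro v hv
  have h1 := hbound ⟨v, hv⟩
  have hTv : ‖T ⟨v, hv⟩‖ = ‖A v‖ := by simp [hT]; rfl
  have hMnn : 0 ≤ M := Mnn.coe_nonneg
  have hvn : ‖(⟨v, hv⟩ : Nᗮ)‖ = ‖v‖ := rfl
  rw [hvn, hTv] at h1
  rw [inv_mul_le_iff₀ (by positivity)]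
  calc ‖v‖ ≤ M * ‖A v‖ := h1
    _ ≤ (M+1) * ‖A v‖ := by nlinarith [norm_nonneg (A v)]

/-- If a normal operator is bounded below on the orthogonal complement of its kernel by `c`,
then every `lam` with `0 < ‖lam‖ < c` lies outside the spectrum. -/
lemma statement3_lam_not_mem (A : H →L[ℂ] H) (hA : A.adjoint ∘L A = A ∘L A.adjoint)
    (c : ℝ) (hbd : ∀ v ∈ (LinearMap.ker (A : H →ₗ[ℂ] H))ᗮ, c * ‖v‖ ≤ ‖A v‖)
    (lam : ℂ) (h0 : lam ≠ 0) (hlt : ‖lam‖ < c) : lam ∉ spectrum ℂ A := by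
  set N : Submodule ℂ H := LinearMap.ker (A : H →ₗ[ℂ] H) with hN
  haveI : CompleteSpace N := (ContinuousLinearMap.isClosed_ker A).completeSpace_coe
  set S : H →L[ℂ] H := algebraMap ℂ (H →L[ℂ] H) lam - A with hS
  clear_value S
  -- adjoint of S
  have hSadj : S.adjoint = algebraMap ℂ (H →L[ℂ] H) (starRingEnd ℂ lam) - A.adjoint := by
    rw [← star_eq_adjoint, ← star_eq_adjoint, hS, star_sub]
    congr 1
    rw [Algebra.algebraMap_eq_smul_one, Algebra.algebraMap_eq_smul_one, star_smul, star_one]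
    rfl
  -- S is normal
  have hAc : star A * A = A * star A := by
    rw [star_eq_adjoint, mul_def, mul_def, hA]
  have hSnormal : S.adjoint ∘L S = S ∘L S.adjoint := by
    rw [← mul_def, ← mul_def, hSadj, hS]
    have expand : ∀ X Y Z W : H →L[ℂ] H, (X - Y) * (Z - W) = X*Z - X*W - Y*Z + Y*W := by
      intros; noncomm_ring
    rw [expand, expand]
    rw [show algebraMap ℂ (H →L[ℂ] H) (starRingEnd ℂ lam) * algebraMap ℂ (H →L[ℂ] H) lam
        = algebraMap ℂ (H →L[ℂ] H) lam * algebraMap ℂ (H →L[ℂ] H) (starRingEnd ℂ lam) from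
        (Algebra.commutes _ _)]
    rw [show algebraMap ℂ (H →L[ℂ] H) (starRingEnd ℂ lam) * A
        = A * algebraMap ℂ (H →L[ℂ] H) (starRingEnd ℂ lam) from (Algebra.commutes _ _)]
    rw [show A.adjoint * algebraMap ℂ (H →L[ℂ] H) lam
        = algebraMap ℂ (H →L[ℂ] H) lam * A.adjoint from (Algebra.commutes _ _).symm]
    rw [show A.adjoint * A = A * A.adjoint from by
      rw [← star_eq_adjoint] at *; exact hAc]
    abel
  -- A maps into Nᗮ
  have hAker : ∀ u, A u = 0 → A.adjoint u = 0 := by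
    intro u hu
    have := statement3_norm_adjoint_apply_eq A hA u
    rw [hu, norm_zero] at this
    exact norm_eq_zero.mp this
  have hrange : ∀ v, A v ∈ Nᗮ := by
    intro v
    rw [Submodule.mem_orthogonal]
    intro u hu
    rw [← adjoint_inner_left, hAker u hu, inner_zero_left]
  -- S is bounded below
  set m : ℝ := min ‖lam‖ (c - ‖lam‖) with hm
  have hm0 : 0 < m := lt_min (norm_pos_iff.mpr h0) (by linarith)
  have hSbd : ∀ x, m * ‖x‖ ≤ ‖S x‖ := by
    intro x
    obtain ⟨u, hu, v, hv, rfl⟩ := N.exists_add_mem_mem_orthogonal x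
    have hAu : A u = 0 := hu
    have hSx : S (u + v) = lam • u + (lam • v - A v) := by
      simp [hS, Algebra.algebraMap_eq_smul_one, map_add, smul_add, hAu]
      try abel
    have hb_mem : lam • v - A v ∈ Nᗮ := Nᗮ.sub_mem (Nᗮ.smul_mem _ hv) (hrange v)
    have hx2 : ‖u + v‖*‖u + v‖ = ‖u‖*‖u‖ + ‖v‖*‖v‖ :=
      norm_add_sq_eq_norm_sq_add_norm_sq_of_inner_eq_zero u v (hv u hu)
    have hS2 : ‖S (u + v)‖*‖S (u + v)‖
        = ‖lam • u‖*‖lam • u‖ + ‖lam • v - A v‖*‖lam • v - A v‖ := by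
      rw [hSx]
      exact norm_add_sq_eq_norm_sq_add_norm_sq_of_inner_eq_zero _ _
        (by exact (Submodule.mem_orthogonal N _).mp hb_mem (lam • u) (N.smul_mem _ hu))
    have h3 : ‖lam • u‖ = ‖lam‖ * ‖u‖ := norm_smul _ _
    have h4 : (c - ‖lam‖) * ‖v‖ ≤ ‖lam • v - A v‖ := by
      have := norm_sub_norm_le (A v) (lam • v)
      have h5 := hbd v hv
      rw [norm_smul] at this
      calc (c - ‖lam‖) * ‖v‖ = c * ‖v‖ - ‖lam‖ * ‖v‖ := by ring
        _ ≤ ‖A v‖ - ‖lam‖ * ‖v‖ := by linarith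
        _ ≤ ‖A v - lam • v‖ := this
        _ = ‖lam • v - A v‖ := norm_sub_rev _ _
    have hml : m ≤ ‖lam‖ := min_le_left _ _
    have hmr : m ≤ c - ‖lam‖ := min_le_right _ _
    have hsq : (m * ‖u + v‖) * (m * ‖u + v‖) ≤ ‖S (u + v)‖ * ‖S (u + v)‖ := by
      nlinarith [hx2, hS2, h3, h4,
        mul_self_le_mul_self (mul_nonneg (by linarith : (0:ℝ) ≤ c - ‖lam‖) (norm_nonneg v)) h4,
        mul_self_le_mul_self hm0.le hml, mul_self_le_mul_self hm0.le hmr,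
        mul_nonneg (norm_nonneg u) (norm_nonneg u), mul_nonneg (norm_nonneg v) (norm_nonneg v),
        norm_nonneg (lam • v - A v), norm_nonneg (lam • u)]
    exact nonneg_le_nonneg_of_sq_le_sq (norm_nonneg _) hsq
  -- S is injective with closed range
  have hanti : AntilipschitzWith (⟨m, hm0.le⟩ : NNReal)⁻¹ ⇑S := by
    apply S.antilipschitz_of_bound
    intro x
    show ‖x‖ ≤ m⁻¹ * ‖S x‖
    exact (le_inv_mul_iff₀ (by exact_mod_cast hm0)).mpr (hSbd x)
  have hinj : Function.Injective ⇑S := hanti.injective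
  have hclr : IsClosed (Set.range ⇑S) := hanti.isClosed_range S.uniformContinuous
  haveI : CompleteSpace (LinearMap.range (S : H →ₗ[ℂ] H)) := by
    have : (LinearMap.range (S : H →ₗ[ℂ] H) : Set H) = Set.range ⇑S := LinearMap.coe_range _
    exact (this ▸ hclr).completeSpace_coe
  have horth : (LinearMap.range (S : H →ₗ[ℂ] H))ᗮ = ⊥ := by
    rw [Submodule.eq_bot_iff]
    intro y hy
    have hy' : ∀ x : H, ⟪S x, y⟫ = 0 := fun x =>
      (Submodule.mem_orthogonal _ _).mp hy (S x) (LinearMap.mem_range_self _ x)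
    have hadj : S.adjoint y = 0 := by
      have h1 : ⟪S.adjoint y, S.adjoint y⟫ = ⟪y, S (S.adjoint y)⟫ :=
        adjoint_inner_left S (S.adjoint y) y
      have h2 : ⟪y, S (S.adjoint y)⟫ = 0 := by
        rw [← inner_conj_symm, hy' (S.adjoint y), map_zero]
      exact inner_self_eq_zero.mp (h1.trans h2)
    have hSy : S y = 0 := by
      have := statement3_norm_adjoint_apply_eq S hSnormal y
      rw [hadj, norm_zero] at this
      exact norm_eq_zero.mp this.symm
    exact hinj (by rw [hSy, map_zero])
  have hrangeS : LinearMap.range (S : H →ₗ[ℂ] H) = ⊤ := Submodule.orthogonal_eq_bot_iff.mp horth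
  have hkerS : LinearMap.ker (S : H →ₗ[ℂ] H) = ⊥ := LinearMap.ker_eq_bot.mpr hinj
  set e := ContinuousLinearEquiv.ofBijective S hkerS hrangeS with he
  have hce : ⇑e = ⇑S := ContinuousLinearEquiv.coeFn_ofBijective S hkerS hrangeS
  rw [spectrum.notMem_iff]
  refine ⟨⟨algebraMap ℂ (H →L[ℂ] H) lam - A, (e.symm : H →L[ℂ] H), ?_, ?_⟩, rfl⟩
  · ext x
    have : S (e.symm x) = x := by rw [← hce]; exact e.apply_symm_apply x
    simpa [mul_def, hS] using this
  · ext x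
    have : e.symm (S x) = x := by
      conv_lhs => rw [← hce]
      exact e.symm_apply_apply x
    simpa [mul_def, hS] using this

end Aux

/-- For a bounded normal operator `A` on a complex Hilbert space, `0` is at most an
isolated point of the spectrum of `A` (i.e. `0 ∉ σ(A)` or `0` is an isolated point of
`σ(A)`) if and only if the range of `A` is closed. -/
theorem statement3 {H : Type*} [NormedAddCommGroup H] [InnerProductSpace ℂ H]
    [CompleteSpace H]
    (A : H →L[ℂ] H) (hA : A.adjoint ∘L A = A ∘L A.adjoint) :
    ((0 : ℂ) ∉ spectrum ℂ A ∨
      ((0 : ℂ) ∈ spectrum ℂ A ∧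
        ∀ᶠ z in nhdsWithin (0 : ℂ) {(0 : ℂ)}ᶜ, z ∉ spectrum ℂ A)) ↔
      IsClosed (Set.range A) := by
  haveI hn : IsStarNormal A := by
    refine ⟨?_⟩
    rw [Commute, SemiconjBy, star_eq_adjoint, mul_def, mul_def, hA]
  constructor
  · rintro (h0 | ⟨h0, hiso⟩)
    · -- `A` is invertible
      obtain ⟨u, hu⟩ := spectrum.zero_notMem_iff ℂ |>.mp h0
      exact statement3_range_closed_of_pseudoinv A (↑u⁻¹) (by rw [← hu]; simp)
    · -- `0` is isolated in the spectrum; use the continuous functional calculus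
      obtain ⟨ε, hε, hiso'⟩ : ∃ ε > 0, ∀ z : ℂ, z ≠ 0 → ‖z‖ < ε → z ∉ spectrum ℂ A := by
        have h1 := eventually_nhdsWithin_iff.mp hiso
        rw [Metric.eventually_nhds_iff] at h1
        obtain ⟨ε, hε, h2⟩ := h1
        refine ⟨ε, hε, fun z hz0 hzn => ?_⟩
        exact h2 (by simpa [dist_zero_right] using hzn) hz0
      have hg : ContinuousOn (fun z : ℂ => z⁻¹) (spectrum ℂ A) := by
        intro z hz
        rcases eq_or_ne z 0 with rfl | hz0
        · have hev : ∀ᶠ w in nhdsWithin (0:ℂ) (spectrum ℂ A), (fun z : ℂ => z⁻¹) w = 0 := by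
            have h1 : ∀ᶠ w in nhds (0:ℂ), ‖w‖ < ε := by
              filter_upwards [Metric.ball_mem_nhds (0:ℂ) hε] with w hw
              simpa [dist_zero_right] using hw
            filter_upwards [eventually_nhdsWithin_of_eventually_nhds h1,
              self_mem_nhdsWithin] with w hw hwσ
            rcases eq_or_ne w 0 with rfl | hw0
            · simp
            · exact absurd hwσ (hiso' w hw0 hw)
          unfold ContinuousWithinAt
          rw [Filter.tendsto_congr' hev]
          simpa using tendsto_const_nhds
        · exact (continuousAt_inv₀ hz0).continuousWithinAt
      refine statement3_range_closed_of_pseudoinv A (cfc (fun z : ℂ => z⁻¹) A) ?_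
      have hid : ContinuousOn (fun z : ℂ => z) (spectrum ℂ A) := continuousOn_id
      have h1 : cfc (fun z : ℂ => z * z⁻¹ * z) A = A * cfc (fun z : ℂ => z⁻¹) A * A := by
        rw [cfc_mul (fun z : ℂ => z * z⁻¹) _ A (hid.mul hg) hid, cfc_mul _ _ A hid hg, cfc_id' ℂ A]
      rw [← h1]
      have : (fun z : ℂ => z * z⁻¹ * z) = fun z : ℂ => z := by
        funext z
        rcases eq_or_ne z 0 with rfl | hz
        · simp
        · field_simp
      rw [this, cfc_id' ℂ A]
  · intro hcl
    obtain ⟨c, hc, hbd⟩ := statement3_exists_bddBelow A hcl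
    by_cases h0 : (0:ℂ) ∈ spectrum ℂ A
    · refine Or.inr ⟨h0, ?_⟩
      have h1 : ∀ᶠ z in nhds (0:ℂ), ‖z‖ < c := by
        filter_upwards [Metric.ball_mem_nhds (0:ℂ) hc] with w hw
        simpa [dist_zero_right] using hw
      filter_upwards [eventually_nhdsWithin_of_eventually_nhds h1,
        self_mem_nhdsWithin] with z hz hz0
      exact statement3_lam_not_mem A hA c hbd z hz0 hz
    · exact Or.inl h0
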